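/- Let H be a bialgebra over a field K of characteristic zero that is connected as a coalgebra, and let I ⊆ H be a coideal with I ≠ (0). Then I contains a nonzero primitive element of H. -/

import Mathlib

open TensorProduct


open TensorProduct

universe u v

/-- A bundled `K`-module, used to form iterated tensor powers. -/
structure ModPack (K : Type u) [CommSemiring K] : Type (max u (v + 1)) where
  carrier : Type v
  [acg : AddCommGroup carrier]
  [mod : Module K carrier]

attribute [instance] ModPack.acg ModPack.mod

/-- `tpk K H n` is the `(n+1)`-fold tensor power `H ⊗ (H ⊗ (⋯ ⊗ H))`. -/
noncomputable def tpk (K : Type u) [CommSemiring K]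
    (H : Type v) [AddCommGroup H] [Module K H] : ℕ → ModPack.{u, v} K
  | 0 => ⟨H⟩
  | n + 1 => ⟨H ⊗[K] (tpk K H n).carrier⟩

/-- The reduced coproduct `Δ̃(x) = Δ(x) - 1 ⊗ x - x ⊗ 1 + ε(x) (1 ⊗ 1)`
(the unique linear map with `Δ̃(1) = 0` and `Δ̃(x) = Δ(x) - 1 ⊗ x - x ⊗ 1` on `ker ε`). -/
noncomputable def redComul (K : Type u) [CommSemiring K]
    (H : Type v) [Ring H] [Bialgebra K H] : H →ₗ[K] H ⊗[K] H :=
  Coalgebra.comul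
    - TensorProduct.mk K H H 1
    - (TensorProduct.mk K H H).flip 1
    + (Coalgebra.counit (R := K)).smulRight ((1 : H) ⊗ₜ[K] (1 : H))

/-- Applying `Δ̃` to the first tensor factor: `Δ̃ ⊗ id^{⊗ n}`. -/
noncomputable def frontMap (K : Type u) [CommSemiring K]
    (H : Type v) [Ring H] [Bialgebra K H] :
    (n : ℕ) → (tpk K H n).carrier →ₗ[K] (tpk K H (n + 1)).carrier
  | 0 => redComul K H
  | n + 1 =>
      (TensorProduct.assoc K H H (tpk K H n).carrier).toLinearMap
        ∘ₗ TensorProduct.map (redComul K H) LinearMap.id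

/-- The iterated reduced coproducts: `Δ̃⁽⁰⁾ = ρ` (with `ρ(x) = x - ε(x)1`), `Δ̃⁽¹⁾ = Δ̃`,
and `Δ̃⁽ᵏ⁺¹⁾ = (Δ̃ ⊗ id^{⊗ k}) ∘ Δ̃⁽ᵏ⁾`. -/
noncomputable def redIter (K : Type u) [CommSemiring K]
    (H : Type v) [Ring H] [Bialgebra K H] :
    (n : ℕ) → H →ₗ[K] (tpk K H n).carrier
  | 0 => LinearMap.id - (Coalgebra.counit (R := K)).smulRight (1 : H)
  | 1 => redComul K H
  | n + 2 => frontMap K H (n + 1) ∘ₗ redIter K H (n + 1)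


section Aux
open Coalgebra LinearMap
variable (K : Type u) [CommRing K] (H : Type v) [Ring H] [Bialgebra K H]

/-- The projection `x ↦ x - ε(x)•1`. -/
noncomputable def prj : H →ₗ[K] H :=
  LinearMap.id - (Coalgebra.counit (R := K)).smulRight (1 : H)

lemma prj_apply (x : H) : prj K H x = x - Coalgebra.counit (R := K) x • 1 := rfl

lemma counit_prj (x : H) : Coalgebra.counit (R := K) (prj K H x) = 0 := by
  simp [prj_apply, Bialgebra.counit_one]

lemma prj_one : prj K H 1 = 0 := by
  simp [prj_apply, Bialgebra.counit_one]

lemma prj_prj : (prj K H) ∘ₗ (prj K H) = prj K H := by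
  ext x
  rw [LinearMap.comp_apply, prj_apply K H (prj K H x), counit_prj]
  simp

lemma smulRight_eq : (Coalgebra.counit (R := K) (A := H)).smulRight (1 : H)
    = (LinearMap.toSpanSingleton K H 1) ∘ₗ (Coalgebra.counit (R := K)) :=
  LinearMap.ext fun x => by simp

lemma rTensor_e_comul (x : H) :
    ((Coalgebra.counit (R := K)).smulRight (1 : H)).rTensor H (Coalgebra.comul x)
      = (1 : H) ⊗ₜ[K] x := by
  rw [smulRight_eq K H, LinearMap.rTensor_comp, LinearMap.comp_apply,
    Coalgebra.rTensor_counit_comul]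
  simp

lemma lTensor_e_comul (x : H) :
    ((Coalgebra.counit (R := K)).smulRight (1 : H)).lTensor H (Coalgebra.comul x)
      = x ⊗ₜ[K] (1 : H) := by
  rw [smulRight_eq K H, LinearMap.lTensor_comp, LinearMap.comp_apply,
    Coalgebra.lTensor_counit_comul]
  simp

lemma redComul_eq : redComul K H
    = TensorProduct.map (prj K H) (prj K H) ∘ₗ (Coalgebra.comul (R := K)) := by
  ext x
  have h1 : (prj K H).rTensor H (Coalgebra.comul (R := K) x)
      = Coalgebra.comul (R := K) x - (1 : H) ⊗ₜ[K] x := by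
    rw [prj, LinearMap.rTensor_sub, LinearMap.sub_apply, LinearMap.rTensor_id,
      rTensor_e_comul]
    rfl
  have h2 : TensorProduct.map (prj K H) (prj K H) (Coalgebra.comul (R := K) x)
      = (prj K H).lTensor H ((prj K H).rTensor H (Coalgebra.comul (R := K) x)) := by
    conv_lhs => rw [← LinearMap.lTensor_comp_rTensor (f := prj K H) (g := prj K H)]
    rfl
  rw [LinearMap.comp_apply, h2, h1, map_sub]
  rw [show (prj K H).lTensor H = LinearMap.id - ((Coalgebra.counit (R := K)).smulRight (1:H)).lTensor H by
    rw [prj, LinearMap.lTensor_sub, LinearMap.lTensor_id]]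
  simp only [LinearMap.sub_apply, LinearMap.id_apply, lTensor_e_comul,
    LinearMap.lTensor_tmul]
  simp only [redComul, LinearMap.add_apply, LinearMap.sub_apply, LinearMap.smulRight_apply,
    TensorProduct.mk_apply, LinearMap.flip_apply, prj_apply, TensorProduct.tmul_sub,
    TensorProduct.tmul_smul]
  abel

lemma redComul_prj : redComul K H ∘ₗ prj K H = redComul K H := by
  rw [redComul_eq]
  ext x
  have hone : (TensorProduct.map (prj K H) (prj K H)) (Coalgebra.comul (R := K) (1 : H)) = 0 := by
    rw [Bialgebra.comul_one, Algebra.TensorProduct.one_def, TensorProduct.map_tmul, prj_one,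
      TensorProduct.zero_tmul]
  simp only [LinearMap.comp_apply, prj_apply, map_sub, map_smul, hone, smul_zero, sub_zero]

end Aux

section Aux2
open Coalgebra LinearMap
variable (K : Type u) [CommRing K] (H : Type v) [Ring H] [Bialgebra K H]

set_option maxHeartbeats 1000000 in
lemma redComul_coassoc :
    (TensorProduct.assoc K H H H).toLinearMap ∘ₗ (redComul K H).rTensor H ∘ₗ redComul K H
      = (redComul K H).lTensor H ∘ₗ redComul K H := by
  have hCP : (TensorProduct.map (prj K H) (prj K H) ∘ₗ (Coalgebra.comul (R := K) (A := H)))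
        ∘ₗ prj K H
      = TensorProduct.map (prj K H) (prj K H) ∘ₗ (Coalgebra.comul (R := K) (A := H)) := by
    rw [← redComul_eq]; exact redComul_prj K H
  rw [redComul_eq]
  set P : H →ₗ[K] H := prj K H with hP
  set C : H →ₗ[K] H ⊗[K] H := Coalgebra.comul (R := K) (A := H) with hC
  rw [LinearMap.rTensor_comp, LinearMap.lTensor_comp]
  simp only [LinearMap.comp_assoc]
  have L1 : (C.rTensor H) ∘ₗ (TensorProduct.map P P ∘ₗ C)
      = TensorProduct.map (C ∘ₗ P) P ∘ₗ C := by
    rw [← LinearMap.comp_assoc, LinearMap.rTensor_comp_map]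
  have L2 : ((TensorProduct.map P P).rTensor H) ∘ₗ (TensorProduct.map (C ∘ₗ P) P ∘ₗ C)
      = TensorProduct.map (TensorProduct.map P P ∘ₗ C) P ∘ₗ C := by
    rw [← LinearMap.comp_assoc, LinearMap.rTensor_comp_map, ← LinearMap.comp_assoc, hCP]
  have L3 : TensorProduct.map (TensorProduct.map P P ∘ₗ C) P
      = TensorProduct.map (TensorProduct.map P P) P ∘ₗ C.rTensor H := by
    have h := TensorProduct.map_comp (TensorProduct.map P P) P C (LinearMap.id (M := H))
    rw [LinearMap.comp_id] at h
    exact h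
  have R1 : (C.lTensor H) ∘ₗ (TensorProduct.map P P ∘ₗ C)
      = TensorProduct.map P (C ∘ₗ P) ∘ₗ C := by
    rw [← LinearMap.comp_assoc, LinearMap.lTensor_comp_map]
  have R2 : ((TensorProduct.map P P).lTensor H) ∘ₗ (TensorProduct.map P (C ∘ₗ P) ∘ₗ C)
      = TensorProduct.map P (TensorProduct.map P P ∘ₗ C) ∘ₗ C := by
    rw [← LinearMap.comp_assoc, LinearMap.lTensor_comp_map, ← LinearMap.comp_assoc, hCP]
  rw [L1, L2, R1, R2, L3, LinearMap.comp_assoc]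
  rw [← LinearMap.comp_assoc _ _ (TensorProduct.assoc K H H H).toLinearMap,
    ← TensorProduct.map_map_comp_assoc_eq, LinearMap.comp_assoc,
    show (TensorProduct.assoc K H H H).toLinearMap ∘ₗ C.rTensor H ∘ₗ C
      = C.lTensor H ∘ₗ C from Coalgebra.coassoc,
    ← LinearMap.comp_assoc, LinearMap.map_comp_lTensor]

/-- Lemma A: the iterated reduced coproduct applies `Δ̃` on the tail. -/
lemma redIter_succ (n : ℕ) :
    redIter K H (n + 1) = (redIter K H n).lTensor H ∘ₗ redComul K H := by
  induction n with
  | zero =>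
      show redComul K H = (prj K H).lTensor H ∘ₗ redComul K H
      have h : (prj K H).lTensor H ∘ₗ (TensorProduct.map (prj K H) (prj K H)
            ∘ₗ (Coalgebra.comul (R := K) (A := H)))
          = TensorProduct.map (prj K H) ((prj K H) ∘ₗ (prj K H))
            ∘ₗ (Coalgebra.comul (R := K) (A := H)) := by
        rw [← LinearMap.comp_assoc, LinearMap.lTensor_comp_map]
      rw [redComul_eq, h, prj_prj, ← redComul_eq]
  | succ n ih =>
      set T := (tpk K H n).carrier
      set f : H →ₗ[K] T := redIter K H n
      set D : H →ₗ[K] H ⊗[K] H := redComul K H with hD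
      show ((TensorProduct.assoc K H H T).toLinearMap ∘ₗ TensorProduct.map D LinearMap.id)
          ∘ₗ redIter K H (n + 1) = (redIter K H (n+1)).lTensor H ∘ₗ D
      conv_lhs => rw [ih]
      -- LHS = (assoc ∘ₗ D.rTensor T) ∘ₗ (f.lTensor H ∘ₗ D)
      have S1 : (TensorProduct.map D (LinearMap.id (M := T))) ∘ₗ (f.lTensor H ∘ₗ D)
          = TensorProduct.map D f ∘ₗ D := by
        rw [← LinearMap.comp_assoc,
          show TensorProduct.map D (LinearMap.id (M := T)) ∘ₗ f.lTensor H
            = TensorProduct.map D f from LinearMap.rTensor_comp_lTensor (f := D) (g := f)]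
      have S2 : TensorProduct.map D f
          = f.lTensor (H ⊗[K] H) ∘ₗ D.rTensor H := (LinearMap.lTensor_comp_rTensor (f := D) (g := f)).symm
      have N1 : (TensorProduct.assoc K H H T).toLinearMap ∘ₗ f.lTensor (H ⊗[K] H)
          = (f.lTensor H).lTensor H ∘ₗ (TensorProduct.assoc K H H H).toLinearMap := by
        have h := TensorProduct.map_map_comp_assoc_eq (LinearMap.id (M := H))
          (LinearMap.id (M := H)) f
        rw [TensorProduct.map_id] at h
        exact h.symm
      rw [LinearMap.comp_assoc, S1, S2, LinearMap.comp_assoc, ← LinearMap.comp_assoc _ _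
        (TensorProduct.assoc K H H T).toLinearMap, N1,
        LinearMap.comp_assoc]
      rw [show (TensorProduct.assoc K H H H).toLinearMap ∘ₗ D.rTensor H ∘ₗ D
          = D.lTensor H ∘ₗ D from redComul_coassoc K H]
      rw [← LinearMap.comp_assoc, ← LinearMap.lTensor_comp, ← ih]
      rfl

/-- The canonical map pulling the last tensor factor outside. -/
noncomputable def psi (K : Type u) [CommRing K] (H : Type v) [Ring H] [Bialgebra K H] :
    (n : ℕ) → (tpk K H (n+1)).carrier →ₗ[K] (tpk K H n).carrier ⊗[K] H
  | 0 => LinearMap.id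
  | n + 1 => (TensorProduct.assoc K H (tpk K H n).carrier H).symm.toLinearMap
      ∘ₗ (psi K H n).lTensor H

/-- Lemma B: the iterated reduced coproduct also applies `Δ̃⁽ⁿ⁾` on the front factor. -/
lemma psi_redIter (n : ℕ) :
    psi K H n ∘ₗ redIter K H (n + 1) = (redIter K H n).rTensor H ∘ₗ redComul K H := by
  induction n with
  | zero =>
      show LinearMap.id ∘ₗ redComul K H = (prj K H).rTensor H ∘ₗ redComul K H
      have h : (prj K H).rTensor H ∘ₗ (TensorProduct.map (prj K H) (prj K H)
            ∘ₗ (Coalgebra.comul (R := K) (A := H)))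
          = TensorProduct.map ((prj K H) ∘ₗ (prj K H)) (prj K H)
            ∘ₗ (Coalgebra.comul (R := K) (A := H)) := by
        rw [← LinearMap.comp_assoc, LinearMap.rTensor_comp_map]
      rw [LinearMap.id_comp, redComul_eq, h, prj_prj, ← redComul_eq]
  | succ n ih =>
      set T := (tpk K H n).carrier
      set f : H →ₗ[K] T := redIter K H n
      set D : H →ₗ[K] H ⊗[K] H := redComul K H with hD
      show ((TensorProduct.assoc K H T H).symm.toLinearMap ∘ₗ (psi K H n).lTensor H)
          ∘ₗ redIter K H (n + 2) = (redIter K H (n+1)).rTensor H ∘ₗ D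
      rw [redIter_succ K H (n+1)]
      -- LHS = (assoc⁻¹ ∘ lTensor (psi n)) ∘ (lTensor (redIter (n+1)) ∘ D)
      rw [LinearMap.comp_assoc, ← LinearMap.comp_assoc _ _ ((psi K H n).lTensor H),
        ← LinearMap.lTensor_comp, ih, LinearMap.lTensor_comp, ← hD, LinearMap.comp_assoc]
      -- LHS = assoc⁻¹ ∘ (lTensor (rTensor f) ∘ (lTensor D ∘ D))
      rw [show (D.lTensor H) ∘ₗ D
          = (TensorProduct.assoc K H H H).toLinearMap ∘ₗ D.rTensor H ∘ₗ D
          from (redComul_coassoc K H).symm]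
      have N1 : ((f.rTensor H).lTensor H) ∘ₗ (TensorProduct.assoc K H H H).toLinearMap
          = (TensorProduct.assoc K H T H).toLinearMap ∘ₗ (f.lTensor H).rTensor H := by
        have h := TensorProduct.map_map_comp_assoc_eq (LinearMap.id (M := H)) f
          (LinearMap.id (M := H))
        exact h
      rw [← LinearMap.comp_assoc _ _ ((f.rTensor H).lTensor H), N1]
      have N2 : (TensorProduct.assoc K H T H).symm.toLinearMap
          ∘ₗ (TensorProduct.assoc K H T H).toLinearMap = LinearMap.id :=
        LinearMap.ext fun x => by simp
      rw [LinearMap.comp_assoc, ← LinearMap.comp_assoc _ _ (TensorProduct.assoc K H T H).symm.toLinearMap,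
        ← LinearMap.comp_assoc _ _ ((TensorProduct.assoc K H T H).symm.toLinearMap
          ∘ₗ (TensorProduct.assoc K H T H).toLinearMap), N2, LinearMap.id_comp]
      -- LHS = rTensor (lTensor f) ∘ (rTensor D ∘ D) = rTensor (lTensor f ∘ D) ∘ D
      rw [← LinearMap.comp_assoc, ← LinearMap.rTensor_comp, ← redIter_succ]
      rfl

end Aux2

section Extract
open LinearMap

universe w w'

lemma extract_zero {K : Type u} [Field K] {H : Type w} [AddCommGroup H] [Module K H]
    {M : Type w'} [AddCommGroup M] [Module K M]
    (f : H →ₗ[K] M) (I : Submodule K H) (hIf : ∀ z ∈ I, f z = 0 → z = 0)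
    (u : H ⊗[K] H) (h1 : f.rTensor H u = 0) (h2 : f.lTensor H u = 0)
    (hJ : u ∈ LinearMap.range (TensorProduct.map I.subtype (LinearMap.id : H →ₗ[K] H))
        ⊔ LinearMap.range (TensorProduct.map (LinearMap.id : H →ₗ[K] H) I.subtype)) :
    u = 0 := by
  classical
  set F := LinearMap.ker f with hF
  have e0 : Function.Exact F.subtype f :=
    LinearMap.exact_iff.mpr (Submodule.range_subtype F).symm
  -- Step 1: u = map F.subtype F.subtype v for some v
  have eR : Function.Exact (F.subtype.rTensor H) (f.rTensor H) :=
    Module.Flat.rTensor_exact H e0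
  obtain ⟨w, hw⟩ := (eR u).mp h1
  have hcomm : f.lTensor H ∘ₗ F.subtype.rTensor H = F.subtype.rTensor M ∘ₗ f.lTensor F := by
    rw [LinearMap.lTensor_comp_rTensor (f := F.subtype) (g := f),
      LinearMap.rTensor_comp_lTensor (f := F.subtype) (g := f)]
  have h2' : F.subtype.rTensor M (f.lTensor F w) = 0 := by
    have := congrArg (fun t => t w) hcomm
    simp only [LinearMap.comp_apply] at this
    rw [← this, hw, h2]
  have hinjR : Function.Injective (F.subtype.rTensor M) :=
    Module.Flat.rTensor_preserves_injective_linearMap _ F.injective_subtype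
  have hw0 : f.lTensor F w = 0 := hinjR (by simpa using h2')
  have eL : Function.Exact (F.subtype.lTensor F) (f.lTensor F) :=
    Module.Flat.lTensor_exact F e0
  obtain ⟨v, hv⟩ := (eL w).mp hw0
  have huv : u = TensorProduct.map F.subtype F.subtype v := by
    rw [← hw, ← hv, ← LinearMap.comp_apply,
      LinearMap.rTensor_comp_lTensor (f := F.subtype) (g := F.subtype)]
  -- Step 2: map mkQ mkQ kills u
  set g := I.mkQ with hg
  have hgI : g ∘ₗ I.subtype = 0 := by
    ext z; simp [hg]
  have hGG : TensorProduct.map g g u = 0 := by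
    rw [Submodule.mem_sup] at hJ
    obtain ⟨a, ⟨a', rfl⟩, b, ⟨b', rfl⟩, rfl⟩ := hJ
    rw [map_add, ← LinearMap.comp_apply, ← TensorProduct.map_comp, hgI,
      ← LinearMap.comp_apply, ← TensorProduct.map_comp, hgI]
    simp
  -- Step 3: injectivity
  set h : F →ₗ[K] H ⧸ I := g ∘ₗ F.subtype with hh
  have hinj : Function.Injective h := by
    rw [← LinearMap.ker_eq_bot]
    rw [Submodule.eq_bot_iff]
    intro z hz
    have hzI : (z : H) ∈ I := by
      have : g (F.subtype z) = 0 := hz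
      simpa [hg, Submodule.Quotient.mk_eq_zero] using this
    have : (z : H) = 0 := hIf z hzI z.2
    exact Subtype.ext this
  have hmapinj : Function.Injective (TensorProduct.map h h) := by
    rw [← LinearMap.rTensor_comp_lTensor (f := h) (g := h), LinearMap.coe_comp]
    exact Function.Injective.comp
      (Module.Flat.rTensor_preserves_injective_linearMap _ hinj)
      (Module.Flat.lTensor_preserves_injective_linearMap _ hinj)
  have hv0 : v = 0 := by
    apply hmapinj
    rw [map_zero]
    have : TensorProduct.map h h = TensorProduct.map g g ∘ₗ TensorProduct.map F.subtype F.subtype := by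
      rw [← TensorProduct.map_comp]
    rw [this, LinearMap.comp_apply, ← huv, hGG]
  rw [huv, hv0, map_zero]

end Extract


section Main
open LinearMap

theorem statement14' {K : Type u} [Field K]
    {H : Type v} [Ring H] [Bialgebra K H]
    (hconn : ∀ x : H, ∃ n : ℕ, redIter K H n x = 0)
    (I : Submodule K H)
    (hcounit : ∀ x ∈ I, Coalgebra.counit (R := K) x = 0)
    (hcomul : ∀ x ∈ I, Coalgebra.comul (R := K) x ∈
      LinearMap.range (TensorProduct.map I.subtype (LinearMap.id : H →ₗ[K] H))
        ⊔ LinearMap.range (TensorProduct.map (LinearMap.id : H →ₗ[K] H) I.subtype))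
    (hI : I ≠ ⊥) :
    ∃ x ∈ I, x ≠ 0 ∧ Coalgebra.comul (R := K) x = x ⊗ₜ[K] (1 : H) + (1 : H) ⊗ₜ[K] x := by
  classical
  obtain ⟨x0, hx0I, hx00⟩ := (Submodule.ne_bot_iff I).mp hI
  have hex : ∃ n : ℕ, ∃ y : H, y ∈ I ∧ y ≠ 0 ∧ redIter K H n y = 0 := by
    obtain ⟨n, hn⟩ := hconn x0
    exact ⟨n, x0, hx0I, hx00, hn⟩
  obtain ⟨y, hyI, hy0, hym⟩ := Nat.find_spec hex
  have hcy : Coalgebra.counit (R := K) y = 0 := hcounit y hyI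
  have hredapp : redComul K H y
      = Coalgebra.comul (R := K) y - (1:H) ⊗ₜ[K] y - y ⊗ₜ[K] (1:H) := by
    simp only [redComul, LinearMap.sub_apply, LinearMap.add_apply, TensorProduct.mk_apply,
      LinearMap.flip_apply, LinearMap.smulRight_apply, hcy, zero_smul, add_zero]
  have hred : redComul K H y = 0 := by
    rcases lt_or_ge (Nat.find hex) 2 with hlt | hge
    · rcases (by omega : Nat.find hex = 0 ∨ Nat.find hex = 1) with h | h
      · exfalso
        apply hy0
        rw [h] at hym
        have h0 : y - Coalgebra.counit (R := K) y • (1 : H) = 0 := hym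
        rwa [hcy, zero_smul, sub_zero] at h0
      · rw [h] at hym
        exact hym
    · obtain ⟨k, hk⟩ : ∃ k, Nat.find hex = k + 2 := ⟨Nat.find hex - 2, by omega⟩
      rw [hk] at hym
      have h2 : (redIter K H (k+1)).lTensor H (redComul K H y) = 0 := by
        have h := LinearMap.congr_fun (redIter_succ K H (k+1)) y
        exact h.symm.trans hym
      have h1 : (redIter K H (k+1)).rTensor H (redComul K H y) = 0 := by
        have h := LinearMap.congr_fun (psi_redIter K H (k+1)) y
        refine h.symm.trans ?_
        rw [show (psi K H (k+1) ∘ₗ redIter K H (k+1+1)) y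
            = psi K H (k+1) (redIter K H (k+2) y) from rfl, hym, map_zero]
      have hIf : ∀ z ∈ I, redIter K H (k+1) z = 0 → z = 0 := by
        intro z hzI hz0
        by_contra hzne
        exact Nat.find_min hex (by omega : k + 1 < Nat.find hex) ⟨z, hzI, hzne, hz0⟩
      have hJ : redComul K H y ∈
          LinearMap.range (TensorProduct.map I.subtype (LinearMap.id : H →ₗ[K] H))
            ⊔ LinearMap.range (TensorProduct.map (LinearMap.id : H →ₗ[K] H) I.subtype) := by
        rw [hredapp]
        have m1 : (1:H) ⊗ₜ[K] y ∈
            LinearMap.range (TensorProduct.map I.subtype (LinearMap.id : H →ₗ[K] H))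
              ⊔ LinearMap.range (TensorProduct.map (LinearMap.id : H →ₗ[K] H) I.subtype) :=
          Submodule.mem_sup_right ⟨(1:H) ⊗ₜ[K] (⟨y, hyI⟩ : I), by simp⟩
        have m2 : y ⊗ₜ[K] (1:H) ∈
            LinearMap.range (TensorProduct.map I.subtype (LinearMap.id : H →ₗ[K] H))
              ⊔ LinearMap.range (TensorProduct.map (LinearMap.id : H →ₗ[K] H) I.subtype) :=
          Submodule.mem_sup_left ⟨(⟨y, hyI⟩ : I) ⊗ₜ[K] (1:H), by simp⟩
        exact Submodule.sub_mem _ (Submodule.sub_mem _ (hcomul y hyI) m1) m2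
      exact extract_zero (redIter K H (k+1)) I hIf (redComul K H y) h1 h2 hJ
  refine ⟨y, hyI, hy0, ?_⟩
  rw [hredapp] at hred
  rw [sub_sub, sub_eq_zero] at hred
  rw [hred, add_comm]

end Main

/-- `x` is a primitive element of the bialgebra `H`: `Δ(x) = x ⊗ 1 + 1 ⊗ x`. -/
def IsPrimitive (K : Type*) {H : Type*} [CommSemiring K] [Ring H] [Bialgebra K H] (x : H) : Prop :=
  Coalgebra.comul (R := K) x = x ⊗ₜ[K] (1 : H) + (1 : H) ⊗ₜ[K] x

/-- In a bialgebra that is connected as a coalgebra, every nonzero coideal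
contains a nonzero primitive element. -/
theorem statement14 {K : Type*} [Field K] [CharZero K]
    {H : Type*} [Ring H] [Bialgebra K H]
    (hconn : ∀ x : H, ∃ n : ℕ, redIter K H n x = 0)
    (I : Submodule K H)
    (hcounit : ∀ x ∈ I, Coalgebra.counit (R := K) x = 0)
    (hcomul : ∀ x ∈ I, Coalgebra.comul (R := K) x ∈
      LinearMap.range (TensorProduct.map I.subtype (LinearMap.id : H →ₗ[K] H))
        ⊔ LinearMap.range (TensorProduct.map (LinearMap.id : H →ₗ[K] H) I.subtype))
    (hI : I ≠ ⊥) :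
    ∃ x ∈ I, x ≠ 0 ∧ IsPrimitive K x := by
  obtain ⟨x, hx, hne, hprim⟩ := statement14' hconn I hcounit hcomul hI
  exact ⟨x, hx, hne, hprim⟩
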